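/- Let a, b, c ∈ ℝ. If the quadratic form ξ ↦ Q(ξ) − (a ξ₁₂ + b ξ₂₃ + c ξ₃₁)² is rank-one convex, i.e. Q(x ⊗ y) ≥ (a x₁y₂ + b x₂y₃ + c x₃y₁)² for all x, y ∈ ℝ³, where Q(ξ) = ξ₁₁² + ξ₂₂² + ξ₃₃² − 2ξ₁₁ξ₂₂ − 2ξ₂₂ξ₃₃ − 2ξ₃₃ξ₁₁ + ξ₁₂² + ξ₂₃² + ξ₃₁², then a = b = c = 0. -/

import Mathlib

/-- The tensor (outer) product of two vectors in ℝ³, as a 3×3 matrix. -/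
def outer (x y : Fin 3 → ℝ) : Matrix (Fin 3) (Fin 3) ℝ :=
  fun i j => x i * y j

/-- The quadratic form
`Q(ξ) = ξ₁₁² + ξ₂₂² + ξ₃₃² − 2ξ₁₁ξ₂₂ − 2ξ₂₂ξ₃₃ − 2ξ₃₃ξ₁₁ + ξ₁₂² + ξ₂₃² + ξ₃₁²`. -/
def Q (ξ : Matrix (Fin 3) (Fin 3) ℝ) : ℝ :=
  ξ 0 0 ^ 2 + ξ 1 1 ^ 2 + ξ 2 2 ^ 2
    - 2 * ξ 0 0 * ξ 1 1 - 2 * ξ 1 1 * ξ 2 2 - 2 * ξ 2 2 * ξ 0 0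
    + ξ 0 1 ^ 2 + ξ 1 2 ^ 2 + ξ 2 0 ^ 2

/-- if `ξ ↦ Q(ξ) − (a ξ₁₂ + b ξ₂₃ + c ξ₃₁)²` is rank-one convex, i.e.
`Q(x ⊗ y) ≥ (a x₁y₂ + b x₂y₃ + c x₃y₁)²` for all `x, y ∈ ℝ³`, then `a = b = c = 0`. -/
theorem no_square_subtraction (a b c : ℝ)
    (h : ∀ x y : Fin 3 → ℝ,
      (a * (x 0 * y 1) + b * (x 1 * y 2) + c * (x 2 * y 0)) ^ 2 ≤ Q (outer x y)) :
    a = 0 ∧ b = 0 ∧ c = 0 := by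
  have h1 := h ![1,1,1] ![1,1,1]
  have h2 := h ![1,-1,1] ![1,-1,1]
  have h3 := h ![1,1,-1] ![1,1,-1]
  norm_num [Q, outer, Matrix.cons_val_zero, Matrix.cons_val_one, Matrix.head_cons, Matrix.cons_val_two, Matrix.tail_cons] at h1 h2 h3
  have e1 : a + b + c = 0 := by
    have := h1
    linarith
  have e2 : -a + -b + c = 0 := by
    have := h2
    linarith
  have e3 : a + -b + -c = 0 := by
    have := h3
    linarith
  exact ⟨by linarith, by linarith, by linarith⟩
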